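/- Let A be a linear map on a finite-dimensional real vector space E with all eigenvalues of modulus strictly less than 1 (i.e., A is a contraction in spectral radius). Then for every positive integer n, det(I - Aⁿ) > 0. -/

import Mathlib

open Polynomial Matrix Filter

/-- Evaluating the characteristic polynomial at `x` gives `det (x • 1 - M)`. -/
lemma charpoly_eval_aux {R : Type*} [CommRing R] {m : Type*} [DecidableEq m] [Fintype m]
    (M : Matrix m m R) (x : R) :
    M.charpoly.eval x = (Matrix.scalar m x - M).det := by
  rw [Matrix.charpoly, ← Polynomial.coe_evalRingHom, RingHom.map_det]
  congr 1
  ext i j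
  by_cases h : i = j
  · subst h; simp
  · simp [Matrix.charmatrix_apply_ne _ _ _ h, Matrix.scalar_apply,
      Matrix.diagonal_apply_ne _ h, Matrix.sub_apply]

/-- Membership in the spectrum of a matrix over a field is equivalent to being a root of the
characteristic polynomial. -/
lemma mem_spectrum_iff_isRoot_charpoly {K : Type*} [Field K] {m : Type*} [DecidableEq m]
    [Fintype m] (M : Matrix m m K) (z : K) :
    z ∈ spectrum K M ↔ M.charpoly.IsRoot z := by
  rw [spectrum.mem_iff, Polynomial.IsRoot, charpoly_eval_aux]
  rw [Matrix.isUnit_iff_isUnit_det, isUnit_iff_ne_zero]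
  have : (algebraMap K (Matrix m m K)) z = Matrix.scalar m z := by
    ext i j; simp [Matrix.algebraMap_matrix_apply, Matrix.scalar_apply, Matrix.diagonal]
  rw [this]
  tauto

/-- A monic real polynomial with no roots in `[1, ∞)` is positive at `1`. -/
lemma monic_eval_one_pos (p : ℝ[X]) (hm : p.Monic) (h : ∀ x : ℝ, 1 ≤ x → ¬ p.IsRoot x) :
    0 < p.eval 1 := by
  rcases eq_or_lt_of_le (Nat.zero_le p.natDegree) with hd | hd
  · have : p = 1 := hm.natDegree_eq_zero.mp hd.symm
    simp [this]
  · by_contra hle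
    push_neg at hle
    have h1 : p.eval 1 < 0 := lt_of_le_of_ne hle (fun hc => h 1 le_rfl hc)
    have hdeg : 0 < p.degree := by
      rw [Polynomial.degree_eq_natDegree hm.ne_zero]
      exact_mod_cast hd
    have htop : Tendsto (fun x => p.eval x) atTop atTop :=
      p.tendsto_atTop_of_leadingCoeff_nonneg hdeg (by rw [hm.leadingCoeff]; norm_num)
    obtain ⟨M, hM⟩ := (htop.eventually_ge_atTop 1).and (eventually_ge_atTop (1 : ℝ)) |>.exists
    have hMle : (1 : ℝ) ≤ M := hM.2
    have hcont : ContinuousOn (fun x => p.eval x) (Set.Icc 1 M) :=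
      (Polynomial.continuous p).continuousOn
    have : (0 : ℝ) ∈ Set.Icc (p.eval 1) (p.eval M) :=
      ⟨le_of_lt h1, le_trans zero_le_one hM.1⟩
    obtain ⟨c, hc, hc0⟩ := intermediate_value_Icc hMle hcont this
    exact h c hc.1 hc0

/-- If `A` is a linear map on a finite-dimensional real vector space all of whose
(complex) eigenvalues have modulus strictly less than 1, then `det (I - Aⁿ) > 0`
for every positive integer `n`. -/
theorem stmt_0 (E : Type*) [AddCommGroup E] [Module ℝ E] [FiniteDimensional ℝ E]
    (A : E →ₗ[ℝ] E)
    (hA : ∀ z : ℂ, ((LinearMap.charpoly A).map (algebraMap ℝ ℂ)).IsRoot z → ‖z‖ < 1)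
    (n : ℕ) (hn : 1 ≤ n) :
    0 < LinearMap.det ((LinearMap.id : E →ₗ[ℝ] E) - A ^ n) := by
  classical
  set b := Module.finBasis ℝ E
  set M : Matrix (Fin (Module.finrank ℝ E)) (Fin (Module.finrank ℝ E)) ℝ :=
    LinearMap.toMatrix b b A with hM
  -- reduce the determinant to a matrix determinant
  have hdet : LinearMap.det ((LinearMap.id : E →ₗ[ℝ] E) - A ^ n) = (1 - M ^ n).det := by
    rw [← LinearMap.det_toMatrix b]
    congr 1
    rw [map_sub, LinearMap.toMatrix_pow, LinearMap.toMatrix_id b]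
  rw [hdet]
  -- the complexified matrix
  set Mc : Matrix (Fin (Module.finrank ℝ E)) (Fin (Module.finrank ℝ E)) ℂ :=
    M.map (algebraMap ℝ ℂ) with hMc
  -- all roots of the complexified charpoly of M have modulus < 1
  have hrootsM : ∀ z : ℂ, Mc.charpoly.IsRoot z → ‖z‖ < 1 := by
    intro z hz
    apply hA
    rwa [← LinearMap.charpoly_toMatrix A b, ← Matrix.charpoly_map]
  -- spectral bound for Mc
  have hspec : ∀ z ∈ spectrum ℂ Mc, ‖z‖ < 1 := fun z hz =>
    hrootsM z ((mem_spectrum_iff_isRoot_charpoly Mc z).mp hz)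
  -- roots of charpoly of M^n (complexified) have modulus < 1
  have hrootsMn : ∀ z : ℂ, ((M ^ n).charpoly.map (algebraMap ℝ ℂ)).IsRoot z → ‖z‖ < 1 := by
    intro z hz
    have hmap : (M ^ n).map (algebraMap ℝ ℂ) = Mc ^ n := by
      rw [hMc, ← RingHom.mapMatrix_apply, ← RingHom.mapMatrix_apply, map_pow]
    have hz' : z ∈ spectrum ℂ (Mc ^ n) := by
      rw [_root_.mem_spectrum_iff_isRoot_charpoly, ← hmap, Matrix.charpoly_map]
      exact hz
    rw [spectrum.map_pow_of_pos Mc (lt_of_lt_of_le one_pos hn)] at hz'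
    obtain ⟨w, hw, rfl⟩ := hz'
    calc ‖w ^ n‖ = ‖w‖ ^ n := norm_pow w n
    _ ≤ ‖w‖ ^ 1 := pow_le_pow_of_le_one (norm_nonneg w) (le_of_lt (hspec w hw)) hn
    _ = ‖w‖ := pow_one _
    _ < 1 := hspec w hw
  -- no real root ≥ 1 of charpoly of M^n
  have hreal : ∀ x : ℝ, 1 ≤ x → ¬ (M ^ n).charpoly.IsRoot x := by
    intro x hx hroot
    have : ((M ^ n).charpoly.map (algebraMap ℝ ℂ)).IsRoot (x : ℂ) := by
      have hx' : (x : ℂ) = algebraMap ℝ ℂ x := rfl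
      rw [Polynomial.IsRoot, hx', Polynomial.eval_map, Polynomial.eval₂_at_apply,
        hroot.eq_zero, map_zero]
    have := hrootsMn _ this
    rw [Complex.norm_real, Real.norm_eq_abs, abs_of_nonneg (le_trans zero_le_one hx)] at this
    linarith
  -- conclude
  have := monic_eval_one_pos (M ^ n).charpoly (M ^ n).charpoly_monic hreal
  rw [charpoly_eval_aux] at this
  rwa [(Matrix.scalar (Fin (Module.finrank ℝ E))).map_one] at this
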